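/- Let A, B be n×n complex matrices with ‖A‖_F ≥ ‖B‖_F, and suppose the angle θ between A and B (with respect to the Frobenius inner product ⟨A,B⟩ = tr(B*A)) satisfies θ ≤ 2α ≤ π. Then ‖A − B‖_F ≤ (‖A‖_F − ‖B‖_F) cos α + (‖A‖_F + ‖B‖_F) sin α. -/

import Mathlib

open scoped ComplexOrder

/-- Frobenius norm of a complex matrix. -/
noncomputable def frobNorm {n : ℕ} (A : Matrix (Fin n) (Fin n) ℂ) : ℝ :=
  Real.sqrt (∑ i, ∑ j, ‖A i j‖ ^ 2)

lemma frobNorm_sq {n : ℕ} (A : Matrix (Fin n) (Fin n) ℂ) :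
    frobNorm A ^ 2 = ∑ i, ∑ j, ‖A i j‖ ^ 2 := by
  apply Real.sq_sqrt
  positivity

lemma trace_re {n : ℕ} (A B : Matrix (Fin n) (Fin n) ℂ) :
    (Matrix.trace (B.conjTranspose * A)).re
      = ∑ i, ∑ j, ((starRingEnd ℂ) (B i j) * A i j).re := by
  rw [Finset.sum_comm]
  simp [Matrix.trace, Matrix.diag, Matrix.mul_apply, Matrix.conjTranspose_apply,
    Complex.re_sum]

lemma sub_sq_expand {n : ℕ} (A B : Matrix (Fin n) (Fin n) ℂ) :
    (∑ i, ∑ j, ‖(A - B) i j‖ ^ 2)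
      = (∑ i, ∑ j, ‖A i j‖ ^ 2) + (∑ i, ∑ j, ‖B i j‖ ^ 2)
        - 2 * (Matrix.trace (B.conjTranspose * A)).re := by
  rw [trace_re, Finset.mul_sum, ← Finset.sum_add_distrib, ← Finset.sum_sub_distrib]
  apply Finset.sum_congr rfl; intro i _
  rw [Finset.mul_sum, ← Finset.sum_add_distrib, ← Finset.sum_sub_distrib]
  apply Finset.sum_congr rfl; intro j _
  have : (A - B) i j = A i j - B i j := rfl
  rw [this]
  simp only [Complex.sq_norm, Complex.normSq_apply,
    Complex.sub_re, Complex.sub_im, Complex.mul_re, Complex.conj_re, Complex.conj_im]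
  ring

theorem frob_sub_le_of_angle {n : ℕ} (A B : Matrix (Fin n) (Fin n) ℂ) (α : ℝ)
    (hAB : frobNorm B ≤ frobNorm A)
    (hα0 : 0 ≤ α) (hα : 2 * α ≤ Real.pi)
    (hangle : frobNorm A * frobNorm B * Real.cos (2 * α)
        ≤ (Matrix.trace (B.conjTranspose * A)).re) :
    frobNorm (A - B)
      ≤ (frobNorm A - frobNorm B) * Real.cos α
        + (frobNorm A + frobNorm B) * Real.sin α := by
  set a := frobNorm A with ha
  set b := frobNorm B with hb
  have hb0 : 0 ≤ b := Real.sqrt_nonneg _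
  have ha0 : 0 ≤ a := Real.sqrt_nonneg _
  have hcos : 0 ≤ Real.cos α :=
    Real.cos_nonneg_of_mem_Icc ⟨by linarith [Real.pi_pos], by linarith⟩
  have hsin : 0 ≤ Real.sin α :=
    Real.sin_nonneg_of_nonneg_of_le_pi hα0 (by linarith [Real.pi_pos])
  have hpyth : Real.sin α ^ 2 + Real.cos α ^ 2 = 1 := Real.sin_sq_add_cos_sq α
  have hc2 : Real.cos (2 * α) = Real.cos α ^ 2 - Real.sin α ^ 2 := by
    rw [Real.cos_two_mul]; nlinarith [Real.sin_sq_add_cos_sq α]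
  have key : frobNorm (A - B) ^ 2
      ≤ ((a - b) * Real.cos α + (a + b) * Real.sin α) ^ 2 := by
    rw [frobNorm_sq, sub_sq_expand, ← frobNorm_sq A, ← frobNorm_sq B, ← ha, ← hb]
    nlinarith [mul_nonneg (mul_nonneg (mul_nonneg (sub_nonneg.2 hAB) (by linarith : (0:ℝ) ≤ a + b)) hsin) hcos,
      mul_nonneg ha0 hb0]
  have hR : 0 ≤ (a - b) * Real.cos α + (a + b) * Real.sin α := by
    have := mul_nonneg (sub_nonneg.2 hAB) hcos
    have := mul_nonneg (by linarith : (0:ℝ) ≤ a + b) hsin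
    linarith
  calc frobNorm (A - B) = Real.sqrt (frobNorm (A - B) ^ 2) :=
        (Real.sqrt_sq (Real.sqrt_nonneg _)).symm
    _ ≤ Real.sqrt (((a - b) * Real.cos α + (a + b) * Real.sin α) ^ 2) :=
        Real.sqrt_le_sqrt key
    _ = _ := Real.sqrt_sq hR
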